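/- arXiv:2305.06089 — 2 statements merged into one kernel-verified Lean document; each statement's English description precedes it below -/
import Mathlib

section
/- Let X and Y be Banach spaces such that every bounded operator from X to Y* is compact. If (xₙ) and (yₙ) are weakly Cauchy sequences in X and Y respectively, then (xₙ ⊗ yₙ) is weakly Cauchy in the projective tensor product X ⊗̂π Y. -/
open Filter Topology NormedSpace
open scoped ENNReal NNReal

/-- `Z`, together with the continuous bilinear map `m`, is (a realization of) the projective
tensor product `X ⊗̂π Y`: the span of elementary tensors is dense, and every continuous bilinear
map into a Banach space lifts to a continuous linear map on `Z` with the same norm. -/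
structure IsProjTensorProduct (X Y Z : Type*) [NormedAddCommGroup X] [NormedSpace ℝ X]
    [NormedAddCommGroup Y] [NormedSpace ℝ Y] [NormedAddCommGroup Z] [NormedSpace ℝ Z]
    (m : X →L[ℝ] Y →L[ℝ] Z) : Prop where
  dense_span : Dense (Submodule.span ℝ {z : Z | ∃ x y, m x y = z} : Set Z)
  lift : ∀ (W : Type) [NormedAddCommGroup W] [NormedSpace ℝ W] [CompleteSpace W]
    (B : X →L[ℝ] Y →L[ℝ] W), ∃ T : Z →L[ℝ] W, ‖T‖ = ‖B‖ ∧ ∀ x y, T (m x y) = B x y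

/-- A set is relatively weakly compact if its closure in the weak topology is weakly compact. -/
def RelWeakCompact (X : Type*) [SeminormedAddCommGroup X] [NormedSpace ℝ X] (A : Set X) : Prop :=
  IsCompact (closure ((toWeakSpace ℝ X) '' A))

/-- A set is relatively norm compact if its norm closure is compact. -/
def RelNormCompact (X : Type*) [SeminormedAddCommGroup X] [NormedSpace ℝ X] (A : Set X) : Prop :=
  IsCompact (closure A)

/-- A sequence is weakly Cauchy if every continuous functional sends it to a convergent sequence. -/
def WeaklyCauchySeq {X : Type*} [SeminormedAddCommGroup X] [NormedSpace ℝ X] (x : ℕ → X) : Prop :=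
  ∀ f : X →L[ℝ] ℝ, ∃ l : ℝ, Tendsto (fun n => f (x n)) atTop (nhds l)

/-- A sequence is weakly null if it converges to `0` in the weak topology. -/
def WeaklyNullSeq {X : Type*} [SeminormedAddCommGroup X] [NormedSpace ℝ X] (x : ℕ → X) : Prop :=
  ∀ f : X →L[ℝ] ℝ, Tendsto (fun n => f (x n)) atTop (nhds 0)

/-- A set is weakly precompact if every sequence in it has a weakly Cauchy subsequence. -/
def WeaklyPrecompact {X : Type*} [SeminormedAddCommGroup X] [NormedSpace ℝ X] (A : Set X) : Prop :=
  ∀ x : ℕ → X, (∀ n, x n ∈ A) → ∃ φ : ℕ → ℕ, StrictMono φ ∧ WeaklyCauchySeq (x ∘ φ)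

/-- A (weakly) compact operator maps the closed unit ball to a relatively (weakly) compact set. -/
def WeaklyCompactOp {X Y : Type*} [SeminormedAddCommGroup X] [NormedSpace ℝ X]
    [SeminormedAddCommGroup Y] [NormedSpace ℝ Y] (T : X →L[ℝ] Y) : Prop :=
  RelWeakCompact Y (T '' Metric.closedBall 0 1)

lemma weaklyCauchy_bdd {X : Type*} [NormedAddCommGroup X] [NormedSpace ℝ X]
    {x : ℕ → X} (hx : WeaklyCauchySeq x) : ∃ M : ℝ, 0 ≤ M ∧ ∀ n, ‖x n‖ ≤ M := by
  have h : ∀ f : StrongDual ℝ X, ∃ C, ∀ n, ‖inclusionInDoubleDual ℝ X (x n) f‖ ≤ C := by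
    intro f
    obtain ⟨l, hl⟩ := hx f
    obtain ⟨C, hC⟩ := hl.norm.bddAbove_range
    exact ⟨C, fun n => by simpa using hC ⟨n, rfl⟩⟩
  obtain ⟨C', hC'⟩ := banach_steinhaus h
  refine ⟨C', le_trans (norm_nonneg _) (hC' 0), fun n => ?_⟩
  have := (inclusionInDoubleDualLi ℝ (E := X)).norm_map (x n)
  rw [← this]
  exact hC' n

lemma compact_map_weaklyCauchy {X W : Type*} [NormedAddCommGroup X] [NormedSpace ℝ X]
    [NormedAddCommGroup W] [NormedSpace ℝ W]
    (T : X →L[ℝ] W) (hT : IsCompactOperator T) {x : ℕ → X} (hx : WeaklyCauchySeq x) :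
    ∃ u : W, Tendsto (fun n => T (x n)) atTop (𝓝 u) := by
  obtain ⟨M, hM0, hM⟩ := weaklyCauchy_bdd hx
  have hbdd : Bornology.IsBounded (Set.range x) := by
    apply isBounded_iff_forall_norm_le.mpr
    exact ⟨M, by rintro _ ⟨n, rfl⟩; exact hM n⟩
  have hK : IsCompact (closure ((T : X →ₗ[ℝ] W) '' Set.range x)) :=
    hT.isCompact_closure_image_of_bounded (𝕜₁ := ℝ) hbdd
  have hmem : ∀ n, T (x n) ∈ closure ((T : X →ₗ[ℝ] W) '' Set.range x) := fun n =>
    subset_closure ⟨x n, ⟨n, rfl⟩, rfl⟩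
  -- limits along every dual functional
  have hdual : ∀ g : StrongDual ℝ W, ∃ l, Tendsto (fun n => g (T (x n))) atTop (𝓝 l) := fun g =>
    hx (g.comp T)
  obtain ⟨u, -, φ, hφ, hφT⟩ := hK.tendsto_subseq hmem
  refine ⟨u, tendsto_of_subseq_tendsto fun ns hns => ?_⟩
  obtain ⟨v, -, ψ, hψ, hψT⟩ := hK.tendsto_subseq (x := fun n => T (x (ns n))) (fun n => hmem _)
  have hvu : v = u := by
    rw [eq_iff_forall_dual_eq ℝ]
    intro g
    obtain ⟨l, hl⟩ := hdual g
    have h1 : Tendsto (fun k => g (T (x (φ k)))) atTop (𝓝 (g u)) :=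
      (g.continuous.tendsto u).comp hφT
    have h1' : Tendsto (fun k => g (T (x (φ k)))) atTop (𝓝 l) :=
      hl.comp hφ.tendsto_atTop
    have h2 : Tendsto (fun k => g (T (x (ns (ψ k))))) atTop (𝓝 (g v)) :=
      (g.continuous.tendsto v).comp hψT
    have h2' : Tendsto (fun k => g (T (x (ns (ψ k))))) atTop (𝓝 l) :=
      hl.comp (hns.comp hψ.tendsto_atTop)
    rw [tendsto_nhds_unique h2 h2', tendsto_nhds_unique h1 h1']
  exact ⟨ψ, hvu ▸ hψT⟩


theorem stmt17 {X Y Z : Type*} [NormedAddCommGroup X] [NormedSpace ℝ X] [CompleteSpace X] [NormedAddCommGroup Y] [NormedSpace ℝ Y] [CompleteSpace Y] [NormedAddCommGroup Z] [NormedSpace ℝ Z] [CompleteSpace Z]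
    (m : X →L[ℝ] Y →L[ℝ] Z) (hm : IsProjTensorProduct X Y Z m)
    (hcomp : ∀ T : X →L[ℝ] (Y →L[ℝ] ℝ), IsCompactOperator T)
    (x : ℕ → X) (y : ℕ → Y) (hx : WeaklyCauchySeq x) (hy : WeaklyCauchySeq y) :
    WeaklyCauchySeq (fun n => m (x n) (y n)) := by
  intro f
  set T : X →L[ℝ] (Y →L[ℝ] ℝ) := ((ContinuousLinearMap.compL ℝ Y Z ℝ) f).comp m with hTdef
  obtain ⟨g, hg⟩ := compact_map_weaklyCauchy T (hcomp T) hx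
  obtain ⟨l, hl⟩ := hy g
  obtain ⟨M, hM0, hM⟩ := weaklyCauchy_bdd hy
  refine ⟨l, ?_⟩
  have hfun : (fun n => f ((fun n => m (x n) (y n)) n)) =
      fun n => g (y n) + (T (x n) - g) (y n) := by
    funext n
    simp [hTdef]
  rw [hfun]
  have h2 : Tendsto (fun n => (T (x n) - g) (y n)) atTop (𝓝 0) := by
    have hb : ∀ n, ‖(T (x n) - g) (y n)‖ ≤ ‖T (x n) - g‖ * M := fun n =>
      le_trans ((T (x n) - g).le_opNorm (y n))
        (mul_le_mul_of_nonneg_left (hM n) (norm_nonneg _))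
    have ht : Tendsto (fun n => ‖T (x n) - g‖ * M) atTop (𝓝 (0 * M)) := by
      apply Filter.Tendsto.mul_const
      have := tendsto_sub_nhds_zero_iff.mpr hg
      simpa using this.norm
    exact squeeze_zero_norm hb (by simpa using ht)
  simpa using hl.add h2
end

section
/- Let X and Y be Banach spaces and let (Pₙ) be an unconditional expansion of the identity of X, i.e., a sequence of bounded operators on X such that x = Σₙ Pₙ(x) with unconditional convergence in X, for every x ∈ X. If X ⊗̂π Y contains no complemented subspace isomorphic to ℓ1, then for every bounded operator T : X → Y* the series Σₙ T ∘ Pₙ converges unconditionally in the operator norm of L(X, Y*) with sum T. -/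
open Filter Topology NormedSpace
open scoped ENNReal NNReal

/-- `E` contains a subspace isomorphic to `ℓ1`. -/
def ContainsL1 (E : Type*) [NormedAddCommGroup E] [NormedSpace ℝ E] : Prop :=
  ∃ f : lp (fun _ : ℕ => ℝ) 1 →L[ℝ] E, ∃ c : ℝ, 0 < c ∧ ∀ v, c * ‖v‖ ≤ ‖f v‖

/-- `E` contains a complemented subspace isomorphic to `ℓ1`. -/
def ContainsComplementedL1 (E : Type*) [NormedAddCommGroup E] [NormedSpace ℝ E] : Prop :=
  ∃ (f : lp (fun _ : ℕ => ℝ) 1 →L[ℝ] E) (g : E →L[ℝ] lp (fun _ : ℕ => ℝ) 1),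
    g.comp f = ContinuousLinearMap.id ℝ (lp (fun _ : ℕ => ℝ) 1)


namespace Stmt19Aux

/-- Iteratively choose elements of `α` depending on the history. -/
noncomputable def chooseList {α : Type*} (step : List α → α) : ℕ → List α
  | 0 => []
  | (k+1) => chooseList step k ++ [step (chooseList step k)]

noncomputable def chooseEntry {α : Type*} (step : List α → α) (k : ℕ) : α :=
  step (chooseList step k)

lemma chooseList_length {α : Type*} (step : List α → α) (k : ℕ) :
    (chooseList step k).length = k := by
  induction k with
  | zero => rfl
  | succ k ih => simp [chooseList, ih]

lemma chooseList_mem {α : Type*} (step : List α → α) (k : ℕ) (a : α) :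
    a ∈ chooseList step k ↔ ∃ i, i < k ∧ chooseEntry step i = a := by
  induction k with
  | zero => simp [chooseList]
  | succ k ih =>
    simp only [chooseList, List.mem_append, List.mem_singleton, ih]
    constructor
    · rintro (⟨i, hi, rfl⟩ | rfl)
      · exact ⟨i, by omega, rfl⟩
      · exact ⟨k, by omega, rfl⟩
    · rintro ⟨i, hi, rfl⟩
      rcases Nat.lt_succ_iff_lt_or_eq.1 hi with h | rfl
      · exact Or.inl ⟨i, h, rfl⟩
      · exact Or.inr rfl

lemma chooseEntry_mem {α : Type*} (step : List α → α) {i k : ℕ} (h : i < k) :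
    chooseEntry step i ∈ chooseList step k :=
  (chooseList_mem step k _).2 ⟨i, h, rfl⟩

/-- A uniform bound over a finite list. -/
lemma list_bound {α : Type*} (L : List α) (g : α → ℕ → Prop)
    (hmono : ∀ a m n, m ≤ n → g a m → g a n) (h : ∀ a ∈ L, ∃ N, g a N) :
    ∃ N, ∀ a ∈ L, g a N := by
  induction L with
  | nil => exact ⟨0, by simp⟩
  | cons a L ih =>
    obtain ⟨N₁, hN₁⟩ := h a (by simp)
    obtain ⟨N₂, hN₂⟩ := ih (fun b hb => h b (by simp [hb]))
    refine ⟨max N₁ N₂, ?_⟩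
    intro b hb'
    rcases List.mem_cons.1 hb' with rfl | hb
    · exact hmono _ _ _ (le_max_left _ _) hN₁
    · exact hmono _ _ _ (le_max_right _ _) (hN₂ b hb)

/-- partial sums of a summable family are uniformly bounded. -/
lemma partial_sum_bound {E : Type*} [SeminormedAddCommGroup E] {f : ℕ → E} {a : E}
    (h : HasSum f a) : ∃ c : ℝ, ∀ s : Finset ℕ, ‖∑ n ∈ s, f n‖ ≤ c := by
  have h' := Metric.tendsto_nhds.1 h 1 one_pos
  rcases eventually_atTop.1 h' with ⟨s₀, hs₀⟩
  refine ⟨‖a‖ + 1 + ∑ n ∈ s₀, ‖f n‖, fun s => ?_⟩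
  have hsplit : ∑ n ∈ s ∪ s₀, f n = ∑ n ∈ s, f n + ∑ n ∈ s₀ \ s, f n := by
    rw [← Finset.sum_union Finset.disjoint_sdiff, Finset.union_sdiff_self_eq_union]
  have h1 : ‖∑ n ∈ s ∪ s₀, f n‖ ≤ ‖a‖ + 1 := by
    have hlt := hs₀ (s ∪ s₀) (Finset.le_iff_subset.2 Finset.subset_union_right)
    rw [dist_eq_norm] at hlt
    have htri : ‖∑ n ∈ s ∪ s₀, f n - a + a‖ ≤ ‖∑ n ∈ s ∪ s₀, f n - a‖ + ‖a‖ := norm_add_le _ _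
    rw [sub_add_cancel] at htri
    linarith
  have h2 : ‖∑ n ∈ s₀ \ s, f n‖ ≤ ∑ n ∈ s₀, ‖f n‖ :=
    (norm_sum_le _ _).trans (Finset.sum_le_sum_of_subset_of_nonneg (Finset.sdiff_subset)
      (fun _ _ _ => norm_nonneg _))
  calc ‖∑ n ∈ s, f n‖ = ‖∑ n ∈ s ∪ s₀, f n - ∑ n ∈ s₀ \ s, f n‖ := by
        rw [hsplit, add_sub_cancel_right]
    _ ≤ ‖∑ n ∈ s ∪ s₀, f n‖ + ‖∑ n ∈ s₀ \ s, f n‖ := norm_sub_le _ _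
    _ ≤ ‖a‖ + 1 + ∑ n ∈ s₀, ‖f n‖ := by linarith

/-- Bolzano–Weierstrass: two close terms far out, for bounded sequences in `Fin k → ℝ`. -/
lemma close_pair {k : ℕ} (v : ℕ → Fin k → ℝ) {C : ℝ} (hv : ∀ i l, |v i l| ≤ C)
    {η : ℝ} (hη : 0 < η) (N : ℕ) :
    ∃ p q, N ≤ p ∧ p < q ∧ ∀ l, |v q l - v p l| < η := by
  have hC' : (0:ℝ) ≤ max C 0 := le_max_right _ _
  have hmem : ∀ i, v (N + i) ∈ Metric.closedBall (0 : Fin k → ℝ) (max C 0) := by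
    intro i
    rw [Metric.mem_closedBall, dist_zero_right]
    refine pi_norm_le_iff_of_nonneg hC' |>.2 fun l => ?_
    exact (Real.norm_eq_abs _ ▸ (hv _ l)).trans (le_max_left _ _)
  obtain ⟨b, _, φ, hφ, hconv⟩ :=
    (isCompact_closedBall (0 : Fin k → ℝ) (max C 0)).tendsto_subseq hmem
  rcases Metric.tendsto_atTop.1 hconv (η/2) (by positivity) with ⟨M, hM⟩
  refine ⟨N + φ M, N + φ (M+1), Nat.le_add_right _ _,
    by have := hφ (show M < M + 1 by omega); omega, fun l => ?_⟩
  have h1 := hM M le_rfl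
  have h2 := hM (M+1) (Nat.le_succ M)
  simp only [Function.comp_apply] at h1 h2
  have hd : dist (v (N + φ (M+1))) (v (N + φ M)) < η := by
    calc dist (v (N + φ (M+1))) (v (N + φ M))
        ≤ dist (v (N + φ (M+1))) b + dist b (v (N + φ M)) := dist_triangle _ _ _
      _ < η/2 + η/2 := add_lt_add h2 (by rw [dist_comm]; exact h1)
      _ = η := by ring
  rw [dist_eq_norm] at hd
  have hle : |(v (N + φ (M+1)) - v (N + φ M)) l| ≤ ‖v (N + φ (M+1)) - v (N + φ M)‖ := by
    simpa [Real.norm_eq_abs] using norm_le_pi_norm (v (N + φ (M+1)) - v (N + φ M)) l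
  simpa using lt_of_le_of_lt hle hd

lemma geom_finset_sum_le (s : Finset ℕ) : ∑ j ∈ s, ((1:ℝ)/2) ^ j ≤ 2 := by
  have hs : Summable (fun j : ℕ => ((1:ℝ)/2) ^ j) :=
    summable_geometric_of_lt_one (by norm_num) (by norm_num)
  calc ∑ j ∈ s, ((1:ℝ)/2) ^ j ≤ ∑' j, ((1:ℝ)/2) ^ j :=
        Summable.sum_le_tsum s (fun _ _ => by positivity) hs
    _ = 2 := by rw [tsum_geometric_of_lt_one (by norm_num) (by norm_num)]; norm_num

end Stmt19Aux


namespace Stmt19Aux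

noncomputable section

local notation "ℓ1" => lp (fun _ : ℕ => ℝ) 1

lemma l1_hasSum_abs (a : ℓ1) : HasSum (fun k => |(a : ℕ → ℝ) k|) ‖a‖ := by
  have h := lp.hasSum_norm (p := (1 : ℝ≥0∞)) (E := fun _ : ℕ => ℝ) (by norm_num) a
  simpa [ENNReal.toReal_one, Real.rpow_one, Real.norm_eq_abs] using h

lemma l1_norm_le (v : ℓ1) {c : ℝ} (h : ∀ s : Finset ℕ, ∑ j ∈ s, |(v : ℕ → ℝ) j| ≤ c) :
    ‖v‖ ≤ c := by
  calc ‖v‖ = ∑' j, |(v : ℕ → ℝ) j| := (l1_hasSum_abs v).tsum_eq.symm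
    _ ≤ c := Summable.tsum_le_of_sum_le (l1_hasSum_abs v).summable h

lemma memℓp_one_of (f : ℕ → ℝ) {c : ℝ} (h : ∀ s : Finset ℕ, ∑ j ∈ s, |f j| ≤ c) :
    Memℓp f 1 :=
  memℓp_gen' (C := c) (fun s => by simpa [Real.norm_eq_abs] using h s)

theorem contains_complemented_l1 {Z : Type*} [NormedAddCommGroup Z] [NormedSpace ℝ Z]
    [CompleteSpace Z] (e : ℕ → Z →L[ℝ] ℝ) (u : ℕ → Z) (B C : ℝ) (hB : 0 ≤ B)
    (hu : ∀ k, ‖u k‖ ≤ B)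
    (hdiag : ∀ k, e k (u k) = 1)
    (hoff : ∀ k (L : Finset ℕ), k ∉ L → ∑ l ∈ L, |e l (u k)| ≤ 1/5)
    (habs : ∀ (z : Z) (K : Finset ℕ), ∑ k ∈ K, |e k z| ≤ C * ‖z‖) :
    ContainsComplementedL1 Z := by
  classical
  -- the map ℓ1 → Z
  have hsummu : ∀ a : ℓ1, Summable (fun k => (a : ℕ → ℝ) k • u k) := by
    intro a
    refine Summable.of_norm_bounded
      ((l1_hasSum_abs a).summable.mul_right B) (fun k => ?_)
    rw [norm_smul, Real.norm_eq_abs]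
    exact mul_le_mul_of_nonneg_left (hu k) (abs_nonneg _)
  let flin : ℓ1 →ₗ[ℝ] Z :=
  { toFun := fun a => ∑' k, (a : ℕ → ℝ) k • u k
    map_add' := by
      intro a b
      dsimp only
      have h1 : ∀ k, ((a + b : ℓ1) : ℕ → ℝ) k • u k
          = (a : ℕ → ℝ) k • u k + (b : ℕ → ℝ) k • u k := by
        intro k
        rw [lp.coeFn_add, Pi.add_apply, add_smul]
      rw [tsum_congr h1, ((hsummu a).hasSum.add (hsummu b).hasSum).tsum_eq]
    map_smul' := by
      intro r a
      dsimp only [RingHom.id_apply]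
      have h1 : ∀ k, ((r • a : ℓ1) : ℕ → ℝ) k • u k = r • ((a : ℕ → ℝ) k • u k) := by
        intro k
        rw [lp.coeFn_smul, Pi.smul_apply, smul_assoc]
      rw [tsum_congr h1, ((hsummu a).hasSum.const_smul r).tsum_eq] }
  have hfbound : ∀ a : ℓ1, ‖flin a‖ ≤ B * ‖a‖ := by
    intro a
    have hsn : Summable (fun k => ‖(a : ℕ → ℝ) k • u k‖) := by
      refine Summable.of_nonneg_of_le (fun k => norm_nonneg _) (fun k => ?_)
        ((l1_hasSum_abs a).summable.mul_right B)
      rw [norm_smul, Real.norm_eq_abs]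
      exact mul_le_mul_of_nonneg_left (hu k) (abs_nonneg _)
    calc ‖flin a‖ ≤ ∑' k, ‖(a : ℕ → ℝ) k • u k‖ := norm_tsum_le_tsum_norm hsn
      _ ≤ ∑' k, |(a : ℕ → ℝ) k| * B := by
          refine Summable.tsum_le_tsum (fun k => ?_) hsn ((l1_hasSum_abs a).summable.mul_right B)
          rw [norm_smul, Real.norm_eq_abs]
          exact mul_le_mul_of_nonneg_left (hu k) (abs_nonneg _)
      _ = B * ‖a‖ := by rw [tsum_mul_right, (l1_hasSum_abs a).tsum_eq, mul_comm]
  let f : ℓ1 →L[ℝ] Z := flin.mkContinuous B hfbound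
  -- the map Z → ℓ1
  let glin : Z →ₗ[ℝ] ℓ1 :=
  { toFun := fun z => ⟨fun j => e j z, memℓp_one_of _ (habs z)⟩
    map_add' := by
      intro z w
      apply lp.ext
      rw [lp.coeFn_add]
      funext j
      simp [Pi.add_apply]
    map_smul' := by
      intro r z
      apply lp.ext
      rw [lp.coeFn_smul]
      funext j
      simp [Pi.smul_apply] }
  have hgbound : ∀ z, ‖glin z‖ ≤ C * ‖z‖ := fun z => l1_norm_le _ (habs z)
  let g₀ : Z →L[ℝ] ℓ1 := glin.mkContinuous C hgbound
  have hg₀coe : ∀ (z : Z) (j : ℕ), ((g₀ z : ℓ1) : ℕ → ℝ) j = e j z := fun _ _ => rfl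
  -- the standard basis
  set sing : ℕ → ℓ1 := fun k => lp.single 1 k (1:ℝ) with hsing
  have hsing_coe : ∀ (k j : ℕ), ((sing k : ℓ1) : ℕ → ℝ) j = if j = k then 1 else 0 := by
    intro k j
    by_cases h : j = k
    · subst h; simp [hsing, lp.single_apply_self]
    · simp [hsing, lp.single_apply_ne _ _ _ h, h]
  have hsingle : ∀ a : ℓ1, HasSum (fun k => (a : ℕ → ℝ) k • sing k) a := by
    intro a
    have h := lp.hasSum_single (p := (1:ℝ≥0∞)) (by norm_num) a
    have heq : (fun k => lp.single (1:ℝ≥0∞) k ((a : ℕ → ℝ) k)) =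
        fun k => (a : ℕ → ℝ) k • sing k := by
      funext k
      rw [hsing]
      have h2 := lp.single_smul (E := fun _ : ℕ => ℝ) (𝕜 := ℝ) (1:ℝ≥0∞) k ((a : ℕ → ℝ) k) (1:ℝ)
      rw [smul_eq_mul, mul_one] at h2
      exact h2
    rw [← heq]
    exact h
  -- key estimate on columns
  have hck : ∀ k, ‖g₀ (u k) - sing k‖ ≤ 1/5 := by
    intro k
    refine l1_norm_le _ (fun s => ?_)
    have hco : ∀ j, ((g₀ (u k) - sing k : ℓ1) : ℕ → ℝ) j
        = e j (u k) - (if j = k then 1 else 0) := by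
      intro j
      rw [lp.coeFn_sub, Pi.sub_apply, hg₀coe, hsing_coe]
    by_cases hk : k ∈ s
    · rw [← Finset.sum_erase_add s _ hk]
      have h1 : ∑ j ∈ s.erase k, |((g₀ (u k) - sing k : ℓ1) : ℕ → ℝ) j|
          = ∑ j ∈ s.erase k, |e j (u k)| := by
        refine Finset.sum_congr rfl (fun j hj => ?_)
        rw [hco, if_neg (Finset.ne_of_mem_erase hj), sub_zero]
      have h2 : |((g₀ (u k) - sing k : ℓ1) : ℕ → ℝ) k| = 0 := by
        rw [hco, if_pos rfl, hdiag, sub_self, abs_zero]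
      rw [h1, h2, add_zero]
      exact hoff k _ (Finset.notMem_erase _ _)
    · have h1 : ∑ j ∈ s, |((g₀ (u k) - sing k : ℓ1) : ℕ → ℝ) j|
          = ∑ j ∈ s, |e j (u k)| := by
        refine Finset.sum_congr rfl (fun j hj => ?_)
        rw [hco, if_neg (by rintro rfl; exact hk hj), sub_zero]
      rw [h1]
      exact hoff k _ hk
  -- the operator A = g₀ ∘ f is close to the identity
  set A : ℓ1 →L[ℝ] ℓ1 := g₀.comp f with hA
  have hAbound : ∀ a : ℓ1, ‖A a - a‖ ≤ (1/5) * ‖a‖ := by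
    intro a
    have h1 : HasSum (fun k => (a : ℕ → ℝ) k • g₀ (u k)) (A a) := by
      have := g₀.hasSum (hsummu a).hasSum
      simp only [map_smul] at this
      exact this
    have h3 : HasSum (fun k => (a : ℕ → ℝ) k • (g₀ (u k) - sing k)) (A a - a) := by
      simpa [smul_sub] using h1.sub (hsingle a)
    have hb : ∀ k, ‖(a : ℕ → ℝ) k • (g₀ (u k) - sing k)‖ ≤ |(a : ℕ → ℝ) k| * (1/5) := by
      intro k
      rw [norm_smul, Real.norm_eq_abs]
      exact mul_le_mul_of_nonneg_left (hck k) (abs_nonneg _)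
    have hsumb : Summable (fun k => |(a : ℕ → ℝ) k| * (1/5)) :=
      (l1_hasSum_abs a).summable.mul_right _
    have hsn : Summable (fun k => ‖(a : ℕ → ℝ) k • (g₀ (u k) - sing k)‖) :=
      Summable.of_nonneg_of_le (fun k => norm_nonneg _) hb hsumb
    calc ‖A a - a‖ = ‖∑' k, (a : ℕ → ℝ) k • (g₀ (u k) - sing k)‖ := by rw [h3.tsum_eq]
      _ ≤ ∑' k, ‖(a : ℕ → ℝ) k • (g₀ (u k) - sing k)‖ := norm_tsum_le_tsum_norm hsn
      _ ≤ ∑' k, |(a : ℕ → ℝ) k| * (1/5) := Summable.tsum_le_tsum hb hsn hsumb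
      _ = (1/5) * ‖a‖ := by rw [tsum_mul_right, (l1_hasSum_abs a).tsum_eq, mul_comm]
  have hRnorm : ‖(1 : ℓ1 →L[ℝ] ℓ1) - A‖ < 1 := by
    have : ‖(1 : ℓ1 →L[ℝ] ℓ1) - A‖ ≤ 1/5 := by
      refine ContinuousLinearMap.opNorm_le_bound _ (by norm_num) (fun a => ?_)
      have : ((1 : ℓ1 →L[ℝ] ℓ1) - A) a = -(A a - a) := by
        simp [ContinuousLinearMap.sub_apply, ContinuousLinearMap.one_apply]
      rw [this, norm_neg]
      exact hAbound a
    linarith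
  let uu : (ℓ1 →L[ℝ] ℓ1)ˣ := Units.oneSub ((1 : ℓ1 →L[ℝ] ℓ1) - A) hRnorm
  have huu : (uu : ℓ1 →L[ℝ] ℓ1) = A := by
    rw [Units.val_oneSub, sub_sub_cancel]
  refine ⟨f, ((uu⁻¹ : (ℓ1 →L[ℝ] ℓ1)ˣ) : ℓ1 →L[ℝ] ℓ1).comp g₀, ?_⟩
  rw [ContinuousLinearMap.comp_assoc]
  have h1 : g₀.comp f = A := rfl
  rw [h1, ← huu]
  have : ((uu⁻¹ : (ℓ1 →L[ℝ] ℓ1)ˣ) : ℓ1 →L[ℝ] ℓ1).comp (uu : ℓ1 →L[ℝ] ℓ1)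
      = ((uu⁻¹ * uu : (ℓ1 →L[ℝ] ℓ1)ˣ) : ℓ1 →L[ℝ] ℓ1) := by
    rw [Units.val_mul, ContinuousLinearMap.mul_def]
  rw [this, inv_mul_cancel, Units.val_one, ContinuousLinearMap.one_def]

end

end Stmt19Aux

section Main

open Stmt19Aux

set_option maxHeartbeats 4000000 in
theorem stmt19 {X Y Z : Type*} [NormedAddCommGroup X] [NormedSpace ℝ X] [CompleteSpace X] [NormedAddCommGroup Y] [NormedSpace ℝ Y] [CompleteSpace Y] [NormedAddCommGroup Z] [NormedSpace ℝ Z] [CompleteSpace Z]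
    (m : X →L[ℝ] Y →L[ℝ] Z) (hm : IsProjTensorProduct X Y Z m)
    (P : ℕ → X →L[ℝ] X) (hP : ∀ v : X, HasSum (fun n => P n v) v)
    (hZ : ¬ ContainsComplementedL1 Z) :
    ∀ T : X →L[ℝ] (Y →L[ℝ] ℝ), HasSum (fun n => T.comp (P n)) T := by
  classical
  intro T
  -- uniform boundedness of the partial sum operators
  obtain ⟨M, hM⟩ : ∃ M : ℝ, ∀ J : Finset ℕ, ‖∑ n ∈ J, P n‖ ≤ M := by
    refine banach_steinhaus (fun x => ?_)
    obtain ⟨c, hc⟩ := partial_sum_bound (hP x)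
    exact ⟨c, fun J => by simpa [ContinuousLinearMap.sum_apply] using hc J⟩
  have hM0 : 0 ≤ M := le_trans (norm_nonneg _) (hM ∅)
  set K₀ : ℝ := ‖T‖ * M + 1 with hK₀def
  have hK₀0 : 0 < K₀ := by positivity
  have hcomp : ∀ J : Finset ℕ, (∑ n ∈ J, T.comp (P n)) = T.comp (∑ n ∈ J, P n) := by
    intro J
    ext x y
    simp [ContinuousLinearMap.sum_apply, ContinuousLinearMap.comp_apply, map_sum]
  have hSnorm : ∀ J : Finset ℕ, ‖∑ n ∈ J, T.comp (P n)‖ ≤ K₀ := by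
    intro J
    rw [hcomp]
    calc ‖T.comp (∑ n ∈ J, P n)‖ ≤ ‖T‖ * ‖∑ n ∈ J, P n‖ := T.opNorm_comp_le _
      _ ≤ ‖T‖ * M := mul_le_mul_of_nonneg_left (hM J) (norm_nonneg T)
      _ ≤ K₀ := by rw [hK₀def]; linarith
  -- the functionals on Z induced by the partial sums
  have hH : ∀ J : Finset ℕ, ∃ D : Z →L[ℝ] ℝ, ‖D‖ = ‖∑ n ∈ J, T.comp (P n)‖ ∧
      ∀ x y, D (m x y) = ∑ n ∈ J, (T (P n x)) y := by
    intro J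
    obtain ⟨D, hD1, hD2⟩ := hm.lift ℝ (∑ n ∈ J, T.comp (P n))
    exact ⟨D, hD1, fun x y => by
      simpa [ContinuousLinearMap.sum_apply, ContinuousLinearMap.comp_apply] using hD2 x y⟩
  choose H Hnorm Hspec using hH
  have HnormK : ∀ J, ‖H J‖ ≤ K₀ := fun J => by rw [Hnorm]; exact hSnorm J
  have Hval : ∀ (J : Finset ℕ) (z : Z), |H J z| ≤ K₀ * ‖z‖ := by
    intro J z
    calc |H J z| ≤ ‖H J‖ * ‖z‖ := by
          simpa [Real.norm_eq_abs] using (H J).le_opNorm z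
      _ ≤ K₀ * ‖z‖ := mul_le_mul_of_nonneg_right (HnormK J) (norm_nonneg _)
  -- extension lemma from elementary tensors
  have hext : ∀ D : Z →L[ℝ] ℝ, (∀ x y, D (m x y) = 0) → D = 0 := by
    intro D hD
    have hsub : Submodule.span ℝ {z : Z | ∃ x y, m x y = z} ≤ LinearMap.ker (D : Z →ₗ[ℝ] ℝ) := by
      rw [Submodule.span_le]
      rintro z ⟨x, y, rfl⟩
      simpa using hD x y
    have heq : (D : Z → ℝ) = ((0 : Z →L[ℝ] ℝ) : Z → ℝ) := by
      refine Continuous.ext_on hm.dense_span D.continuous (by continuity) ?_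
      intro z hz
      simpa using hsub hz
    ext z
    exact congrFun heq z
  -- additivity of H over disjoint unions
  have Hadd : ∀ J J' : Finset ℕ, Disjoint J J' → H (J ∪ J') = H J + H J' := by
    intro J J' hd
    have h0 : H (J ∪ J') - H J - H J' = 0 := by
      refine hext _ (fun x y => ?_)
      simp [ContinuousLinearMap.sub_apply, Hspec, Finset.sum_union hd]
    rw [sub_sub, sub_eq_zero] at h0
    exact h0
  have Hzero : H ∅ = 0 := by
    have h := Hadd ∅ ∅ (Finset.disjoint_empty_left _)
    simp only [Finset.empty_union] at h
    have := left_eq_add.1 h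
    exact this
  have Hbi : ∀ (K : Finset ℕ) (S : ℕ → Finset ℕ),
      (∀ i ∈ K, ∀ j ∈ K, i ≠ j → Disjoint (S i) (S j)) →
      H (K.biUnion S) = ∑ k ∈ K, H (S k) := by
    intro K
    induction K using Finset.induction_on with
    | empty => intro S _; simpa using Hzero
    | @insert a K ha ih =>
      intro S hdisj
      rw [Finset.biUnion_insert, Hadd _ _ ?_, Finset.sum_insert ha,
        ih S (fun i hi j hj hij => hdisj i (Finset.mem_insert_of_mem hi) j
          (Finset.mem_insert_of_mem hj) hij)]
      · exact Finset.disjoint_biUnion_right _ _ _ |>.2 (fun i hi =>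
          hdisj a (Finset.mem_insert_self _ _) i (Finset.mem_insert_of_mem hi)
            (by rintro rfl; exact ha hi))
  -- absolute bound for disjoint families
  have Habs : ∀ (z : Z) (K : Finset ℕ) (S : ℕ → Finset ℕ),
      (∀ i ∈ K, ∀ j ∈ K, i ≠ j → Disjoint (S i) (S j)) →
      ∑ k ∈ K, |H (S k) z| ≤ 2 * K₀ * ‖z‖ := by
    intro z K S hdisj
    have hsub : ∀ (K' : Finset ℕ), K' ⊆ K → |∑ k ∈ K', H (S k) z| ≤ K₀ * ‖z‖ := by
      intro K' hK'
      have h1 : ∑ k ∈ K', H (S k) z = H (K'.biUnion S) z := by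
        rw [Hbi K' S (fun i hi j hj hij => hdisj i (hK' hi) j (hK' hj) hij)]
        simp [ContinuousLinearMap.sum_apply]
      rw [h1]
      exact Hval _ z
    set Kp := K.filter (fun k => 0 ≤ H (S k) z) with hKp
    have e1 : ∑ k ∈ Kp, |H (S k) z| = ∑ k ∈ Kp, H (S k) z :=
      Finset.sum_congr rfl (fun k hk => abs_of_nonneg (Finset.mem_filter.1 hk).2)
    have e2 : ∑ k ∈ K.filter (fun k => ¬ 0 ≤ H (S k) z), |H (S k) z|
        = -∑ k ∈ K.filter (fun k => ¬ 0 ≤ H (S k) z), H (S k) z := by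
      rw [← Finset.sum_neg_distrib]
      exact Finset.sum_congr rfl (fun k hk =>
        abs_of_neg (lt_of_not_ge (Finset.mem_filter.1 hk).2))
    calc ∑ k ∈ K, |H (S k) z|
        = ∑ k ∈ Kp, |H (S k) z| + ∑ k ∈ K.filter (fun k => ¬ 0 ≤ H (S k) z), |H (S k) z| :=
          (Finset.sum_filter_add_sum_filter_not K _ _).symm
      _ = ∑ k ∈ Kp, H (S k) z + -∑ k ∈ K.filter (fun k => ¬ 0 ≤ H (S k) z), H (S k) z := by
          rw [e1, e2]
      _ ≤ K₀ * ‖z‖ + K₀ * ‖z‖ := by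
          have b1 := hsub Kp (Finset.filter_subset _ _)
          have b2 := hsub (K.filter (fun k => ¬ 0 ≤ H (S k) z)) (Finset.filter_subset _ _)
          linarith [(abs_le.1 b1).2, (abs_le.1 b2).1, (abs_le.1 b1).1, (abs_le.1 b2).2]
      _ = 2 * K₀ * ‖z‖ := by ring

  -- tail smallness
  have Htail : ∀ (z : Z), ∀ δ : ℝ, 0 < δ →
      ∃ N : ℕ, ∀ J : Finset ℕ, (∀ n ∈ J, N ≤ n) → |H J z| < δ := by
    have hspan : ∀ w ∈ Submodule.span ℝ {z : Z | ∃ x y, m x y = z}, ∀ δ : ℝ, 0 < δ →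
        ∃ N : ℕ, ∀ J : Finset ℕ, (∀ n ∈ J, N ≤ n) → |H J w| < δ := by
      intro w hw
      induction hw using Submodule.span_induction with
      | mem w hw =>
        obtain ⟨x, y, rfl⟩ := hw
        intro δ hδ
        have hSx : HasSum (fun n => (T (P n x)) y) ((T x) y) := by
          have h0 := (((ContinuousLinearMap.apply ℝ ℝ y).comp T)).hasSum (hP x)
          simpa using h0
        obtain ⟨s, hs⟩ := (summable_iff_vanishing.1 hSx.summable)
          (Metric.ball (0:ℝ) δ) (Metric.ball_mem_nhds _ hδ)
        refine ⟨s.sup id + 1, fun J hJ => ?_⟩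
        have hdisj : Disjoint J s := Finset.disjoint_left.2 (fun n hn hns => by
          have h1 : n ≤ s.sup id := Finset.le_sup (f := id) hns
          have h2 := hJ n hn
          omega)
        have hmem := hs J hdisj
        rw [Metric.mem_ball, dist_zero_right, Real.norm_eq_abs] at hmem
        rw [Hspec J x y]
        exact hmem
      | zero =>
        intro δ hδ
        exact ⟨0, fun J _ => by simpa using hδ⟩
      | add w₁ w₂ h₁ h₂ ih₁ ih₂ =>
        intro δ hδ
        obtain ⟨N₁, hN₁⟩ := ih₁ (δ/2) (by positivity)
        obtain ⟨N₂, hN₂⟩ := ih₂ (δ/2) (by positivity)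
        refine ⟨max N₁ N₂, fun J hJ => ?_⟩
        have e1 := hN₁ J (fun n hn => le_trans (le_max_left _ _) (hJ n hn))
        have e2 := hN₂ J (fun n hn => le_trans (le_max_right _ _) (hJ n hn))
        calc |H J (w₁ + w₂)| = |H J w₁ + H J w₂| := by rw [map_add]
          _ ≤ |H J w₁| + |H J w₂| := abs_add_le _ _
          _ < δ := by linarith
      | smul r w hw ih =>
        intro δ hδ
        obtain ⟨N, hN⟩ := ih (δ/(|r|+1)) (by positivity)
        refine ⟨N, fun J hJ => ?_⟩
        have e1 := hN J hJ
        have habs : |H J (r • w)| = |r| * |H J w| := by rw [map_smul]; simp [abs_mul]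
        rw [habs]
        have h2 : |r| * |H J w| ≤ |r| * (δ/(|r|+1)) :=
          mul_le_mul_of_nonneg_left (le_of_lt e1) (abs_nonneg r)
        have h3 : |r| * (δ/(|r|+1)) < δ := by
          have hlt : |r| * (δ/(|r|+1)) < (|r|+1) * (δ/(|r|+1)) :=
            mul_lt_mul_of_pos_right (by linarith [abs_nonneg r]) (by positivity)
          have heq : (|r|+1) * (δ/(|r|+1)) = δ := by
            field_simp
          linarith
        linarith
    intro z δ hδ
    obtain ⟨z', hz'mem, hz'near⟩ := hm.dense_span.exists_dist_lt z
      (show 0 < δ/(2*(K₀+1)) by positivity)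
    obtain ⟨N, hN⟩ := hspan z' hz'mem (δ/2) (by positivity)
    refine ⟨N, fun J hJ => ?_⟩
    have h1 : |H J z - H J z'| ≤ K₀ * ‖z - z'‖ := by
      rw [← map_sub]
      exact Hval J _
    have h2 : ‖z - z'‖ < δ/(2*(K₀+1)) := by
      rw [← dist_eq_norm]
      exact hz'near
    have h3 : K₀ * ‖z - z'‖ < δ/2 := by
      have hle : K₀ * ‖z - z'‖ ≤ K₀ * (δ/(2*(K₀+1))) :=
        mul_le_mul_of_nonneg_left (le_of_lt h2) (le_of_lt hK₀0)
      have hlt : K₀ * (δ/(2*(K₀+1))) < (K₀+1) * (δ/(2*(K₀+1))) :=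
        mul_lt_mul_of_pos_right (by linarith) (by positivity)
      have heq : (K₀+1) * (δ/(2*(K₀+1))) = δ/2 := by
        field_simp
      linarith
    have h4 := hN J hJ
    have h5 : |H J z| ≤ |H J z - H J z'| + |H J z'| := by
      calc |H J z| = |(H J z - H J z') + H J z'| := by rw [sub_add_cancel]
        _ ≤ |H J z - H J z'| + |H J z'| := abs_add_le _ _
    have h6 : K₀ * ‖z - z'‖ + |H J z'| < δ/2 + δ/2 := add_lt_add h3 h4
    have h7 : |H J z - H J z'| + |H J z'| ≤ K₀ * ‖z - z'‖ + |H J z'| := add_le_add h1 le_rfl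
    have h8 : δ/2 + δ/2 = δ := by ring
    exact lt_of_le_of_lt h5 (lt_of_le_of_lt h7 (h8 ▸ h6))

  -- reduce to summability
  suffices hsummable : Summable (fun n => T.comp (P n)) by
    obtain ⟨L, hL⟩ := hsummable
    have hLT : L = T := by
      refine ContinuousLinearMap.ext (fun x => ContinuousLinearMap.ext (fun y => ?_))
      have h1 : HasSum (fun n => (T ((P n) x)) y) ((L x) y) := by
        have h0 := ((ContinuousLinearMap.apply ℝ ℝ y).comp
          ((ContinuousLinearMap.apply ℝ (Y →L[ℝ] ℝ)) x)).hasSum hL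
        simpa using h0
      have h2 : HasSum (fun n => (T ((P n) x)) y) ((T x) y) := by
        simpa using ((ContinuousLinearMap.apply ℝ ℝ y).comp T).hasSum (hP x)
      exact h1.unique h2
    exact hLT ▸ hL
  by_contra hns
  have hns2 : ¬ (∀ e ∈ 𝓝 (0 : X →L[ℝ] Y →L[ℝ] ℝ), ∃ s : Finset ℕ, ∀ t : Finset ℕ,
      Disjoint t s → ∑ n ∈ t, T.comp (P n) ∈ e) :=
    fun hcon => hns ((summable_iff_vanishing (α := X →L[ℝ] Y →L[ℝ] ℝ) (β := ℕ)).2 hcon)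
  push_neg at hns2
  obtain ⟨e, he, hfail⟩ := hns2
  obtain ⟨ε, hε, hball⟩ := (Metric.mem_nhds_iff (α := X →L[ℝ] Y →L[ℝ] ℝ)).1 he
  have hne : ∀ s : Finset ℕ, ∃ t : Finset ℕ, Disjoint t s ∧ ε ≤ ‖∑ n ∈ t, T.comp (P n)‖ := by
    intro s
    obtain ⟨t, ht, hmem⟩ := hfail s
    refine ⟨t, ht, ?_⟩
    by_contra hlt
    push_neg at hlt
    exact hmem (hball ((mem_ball_zero_iff (E := X →L[ℝ] Y →L[ℝ] ℝ)).2 hlt))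
  -- Phase 1 : choose far-out blocks with large norm and witnessing vectors
  have hstep : ∀ L : List (Finset ℕ × Z), ∃ y : Finset ℕ × Z,
      ‖y.2‖ ≤ 1 ∧ ε/2 < H y.1 y.2 ∧
      ∀ p ∈ L, (∀ n' ∈ p.1, ∀ n ∈ y.1, n' < n) ∧
        |H y.1 p.2| < ε/100 * (1/2)^(L.length) := by
    intro L
    obtain ⟨N₁, hN₁⟩ := list_bound L (fun p N => ∀ n' ∈ p.1, n' < N)
      (fun a mm nn hmn hh n' h' => lt_of_lt_of_le (hh n' h') hmn)
      (fun p _ => ⟨p.1.sup id + 1, fun n' h' =>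
        Nat.lt_succ_of_le (Finset.le_sup (f := id) h')⟩)
    obtain ⟨N₂, hN₂⟩ := list_bound L
      (fun p N => ∀ J : Finset ℕ, (∀ n ∈ J, N ≤ n) → |H J p.2| < ε/100 * (1/2)^(L.length))
      (fun a mm nn hmn hh J hJ => hh J (fun n hn => le_trans hmn (hJ n hn)))
      (fun p _ => Htail p.2 _ (by positivity))
    obtain ⟨t, hdisj, hεt⟩ := hne (Finset.range (max N₁ N₂))
    have ht : ∀ n ∈ t, max N₁ N₂ ≤ n := by
      intro n hn
      by_contra hcon
      push_neg at hcon
      exact Finset.disjoint_left.1 hdisj hn (Finset.mem_range.2 hcon)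
    have hHt : ε/2 < ‖H t‖ := by
      rw [Hnorm]
      linarith
    obtain ⟨z₀, hz₀1, hz₀2⟩ := (H t).exists_lt_apply_of_lt_opNorm hHt
    rw [Real.norm_eq_abs] at hz₀2
    obtain ⟨z, hz1, hz2⟩ : ∃ z : Z, ‖z‖ ≤ 1 ∧ ε/2 < H t z := by
      rcases le_or_gt 0 (H t z₀) with hsgn | hsgn
      · exact ⟨z₀, le_of_lt hz₀1, by rwa [abs_of_nonneg hsgn] at hz₀2⟩
      · refine ⟨-z₀, by simpa using le_of_lt hz₀1, ?_⟩
        rw [map_neg]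
        rwa [abs_of_neg hsgn] at hz₀2
    refine ⟨(t, z), hz1, hz2, fun p hp => ⟨?_, ?_⟩⟩
    · intro n' h' n hn
      exact lt_of_lt_of_le (lt_of_lt_of_le (hN₁ p hp n' h') (le_max_left _ _)) (ht n hn)
    · exact hN₂ p hp t (fun n hn => le_trans (le_max_right _ _) (ht n hn))
  let step1 : List (Finset ℕ × Z) → Finset ℕ × Z := fun L => (hstep L).choose
  have hstep1 : ∀ L : List (Finset ℕ × Z),
      ‖(step1 L).2‖ ≤ 1 ∧ ε/2 < H (step1 L).1 (step1 L).2 ∧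
      ∀ p ∈ L, (∀ n' ∈ p.1, ∀ n ∈ (step1 L).1, n' < n) ∧
        |H (step1 L).1 p.2| < ε/100 * (1/2)^(L.length) := fun L => (hstep L).choose_spec
  let J : ℕ → Finset ℕ := fun k => (chooseEntry step1 k).1
  let z : ℕ → Z := fun k => (chooseEntry step1 k).2
  have hPk : ∀ k : ℕ, ‖z k‖ ≤ 1 ∧ ε/2 < H (J k) (z k) ∧
      ∀ p ∈ chooseList step1 k, (∀ n' ∈ p.1, ∀ n ∈ J k, n' < n) ∧
        |H (J k) p.2| < ε/100 * (1/2)^k := by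
    intro k
    have h := hstep1 (chooseList step1 k)
    rw [chooseList_length] at h
    exact h
  have p1 : ∀ k, ‖z k‖ ≤ 1 := fun k => (hPk k).1
  have p2 : ∀ k, ε/2 < H (J k) (z k) := fun k => (hPk k).2.1
  have p3 : ∀ i k, i < k → |H (J k) (z i)| < ε/100 * (1/2)^k := by
    intro i k hik
    exact ((hPk k).2.2 _ (chooseEntry_mem step1 hik)).2
  have p4 : ∀ i k, i < k → ∀ n' ∈ J i, ∀ n ∈ J k, n' < n := by
    intro i k hik
    exact ((hPk k).2.2 _ (chooseEntry_mem step1 hik)).1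
  have pdisj : ∀ i k, i ≠ k → Disjoint (J i) (J k) := by
    intro i k hik
    rcases lt_or_gt_of_ne hik with h | h
    · exact Finset.disjoint_left.2 (fun n hni hnk => lt_irrefl n (p4 i k h n hni n hnk))
    · exact Finset.disjoint_left.2 (fun n hni hnk => lt_irrefl n (p4 k i h n hnk n hni))
  -- Phase 2 : select pairs with small differences against earlier functionals
  have hqstep : ∀ L : List (ℕ × ℕ), ∃ y : ℕ × ℕ,
      (∀ r ∈ L, r.2 < y.1) ∧ y.1 < y.2 ∧
      ∀ r ∈ L, |H (J r.2) (z y.2) - H (J r.2) (z y.1)|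
        < ε/(100 * 2^(L.length) * (L.length + 1)) := by
    intro L
    obtain ⟨N, hN⟩ := list_bound L (fun r N => r.2 < N)
      (fun a mm nn hmn hh => lt_of_lt_of_le hh hmn) (fun r _ => ⟨r.2 + 1, Nat.lt_succ_self _⟩)
    have hv : ∀ (i : ℕ) (l : Fin L.length), |H (J (L.get l).2) (z i)| ≤ K₀ := by
      intro i l
      calc |H (J (L.get l).2) (z i)| ≤ K₀ * ‖z i‖ := Hval _ _
        _ ≤ K₀ * 1 := mul_le_mul_of_nonneg_left (p1 i) (le_of_lt hK₀0)
        _ = K₀ := mul_one _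
    obtain ⟨pp, qq, h1, h2, h3⟩ := close_pair (fun i (l : Fin L.length) => H (J (L.get l).2) (z i))
      (fun i l => hv i l) (show (0:ℝ) < ε/(100 * 2^(L.length) * (L.length + 1)) by positivity) N
    refine ⟨(pp, qq), fun r hr => lt_of_lt_of_le (hN r hr) h1, h2, fun r hr => ?_⟩
    obtain ⟨l, hl⟩ := List.mem_iff_get.1 hr
    rw [← hl]
    exact h3 l
  let step2 : List (ℕ × ℕ) → ℕ × ℕ := fun L => (hqstep L).choose
  have hstep2 : ∀ L : List (ℕ × ℕ),
      (∀ r ∈ L, r.2 < (step2 L).1) ∧ (step2 L).1 < (step2 L).2 ∧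
      ∀ r ∈ L, |H (J r.2) (z (step2 L).2) - H (J r.2) (z (step2 L).1)|
        < ε/(100 * 2^(L.length) * (L.length + 1)) := fun L => (hqstep L).choose_spec
  let pidx : ℕ → ℕ := fun k => (chooseEntry step2 k).1
  let q : ℕ → ℕ := fun k => (chooseEntry step2 k).2
  have hQk : ∀ k : ℕ, (∀ r ∈ chooseList step2 k, r.2 < pidx k) ∧ pidx k < q k ∧
      ∀ r ∈ chooseList step2 k, |H (J r.2) (z (q k)) - H (J r.2) (z (pidx k))|
        < ε/(100 * 2^k * (k+1)) := by
    intro k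
    have h := hstep2 (chooseList step2 k)
    rw [chooseList_length] at h
    exact h
  have q1 : ∀ k, pidx k < q k := fun k => (hQk k).2.1
  have q2 : ∀ i k, i < k → q i < pidx k := fun i k hik => (hQk k).1 _ (chooseEntry_mem step2 hik)
  have q3 : ∀ i k, i < k → |H (J (q i)) (z (q k)) - H (J (q i)) (z (pidx k))|
      < ε/(100 * 2^k * (k+1)) := fun i k hik => (hQk k).2.2 _ (chooseEntry_mem step2 hik)
  have qmono : ∀ i k, i < k → q i < q k := fun i k hik => lt_trans (q2 i k hik) (q1 k)
  have qinj : Function.Injective q := by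
    intro i j hij
    by_contra hne'
    rcases lt_or_gt_of_ne hne' with h | h
    · exact absurd hij (ne_of_lt (qmono _ _ h))
    · exact absurd hij.symm (ne_of_lt (qmono _ _ h))
  -- the final family of functionals and vectors
  let ee : ℕ → Z →L[ℝ] ℝ := fun k => H (J (q k))
  let uvec : ℕ → Z := fun k => z (q k) - z (pidx k)
  have hτ : ∀ jj : ℕ, ε/100 * (1/2:ℝ)^jj ≤ ε/100 := by
    intro jj
    have h1 : ((1:ℝ)/2)^jj ≤ 1 := pow_le_one₀ (by norm_num) (by norm_num)
    nlinarith
  have hd : ∀ k, ε/4 < ee k (uvec k) := by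
    intro k
    have hsplit : ee k (uvec k) = H (J (q k)) (z (q k)) - H (J (q k)) (z (pidx k)) :=
      map_sub _ _ _
    have h1 : ε/2 < H (J (q k)) (z (q k)) := p2 (q k)
    have h2 : |H (J (q k)) (z (pidx k))| < ε/100 * (1/2)^(q k) := p3 (pidx k) (q k) (q1 k)
    have h3 := hτ (q k)
    have h4 := (abs_lt.1 h2).2
    rw [hsplit]
    linarith
  have hd0 : ∀ k, 0 < ee k (uvec k) := fun k => lt_trans (by positivity) (hd k)
  let d : ℕ → ℝ := fun k => ee k (uvec k)
  have hdd : ∀ k, d k = ee k (uvec k) := fun _ => rfl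
  let w : ℕ → Z := fun k => (d k)⁻¹ • uvec k
  have hdinv : ∀ k, (d k)⁻¹ ≤ 4/ε := by
    intro k
    have h4 : (4:ℝ)/ε = (ε/4)⁻¹ := by rw [inv_div]
    rw [h4, hdd]
    exact inv_anti₀ (by positivity) (le_of_lt (hd k))
  have hw : ∀ k, ‖w k‖ ≤ 8/ε := by
    intro k
    have h1 : ‖uvec k‖ ≤ 2 := by
      calc ‖uvec k‖ ≤ ‖z (q k)‖ + ‖z (pidx k)‖ := norm_sub_le _ _
        _ ≤ 2 := by linarith [p1 (q k), p1 (pidx k)]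
    calc ‖w k‖ = |(d k)⁻¹| * ‖uvec k‖ := by rw [norm_smul, Real.norm_eq_abs]
      _ = (d k)⁻¹ * ‖uvec k‖ := by rw [abs_of_pos (inv_pos.2 (hd0 k))]
      _ ≤ (4/ε) * 2 := mul_le_mul (hdinv k) h1 (norm_nonneg _) (by positivity)
      _ = 8/ε := by ring
  have hdiag : ∀ k, ee k (w k) = 1 := by
    intro k
    have h1 : ee k (w k) = (d k)⁻¹ * d k := by
      rw [show w k = (d k)⁻¹ • uvec k from rfl, map_smul, smul_eq_mul, hdd]
    rw [h1, inv_mul_cancel₀ (ne_of_gt (hd0 k))]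
  -- off-diagonal estimate
  have hoffu : ∀ (k : ℕ) (L : Finset ℕ), k ∉ L → ∑ l ∈ L, |ee l (uvec k)| ≤ ε/20 := by
    intro k L hkL
    have hsplit := Finset.sum_filter_add_sum_filter_not L (fun l => l < k)
      (fun l => |ee l (uvec k)|)
    have hle1 : ∑ l ∈ L.filter (fun l => l < k), |ee l (uvec k)| ≤ ε/100 := by
      have hcard : ((L.filter (fun l => l < k)).card : ℝ) ≤ k := by
        have hsub : L.filter (fun l => l < k) ⊆ Finset.range k := fun l hl =>
          Finset.mem_range.2 (Finset.mem_filter.1 hl).2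
        have := Finset.card_le_card hsub
        rw [Finset.card_range] at this
        exact_mod_cast this
      have hbound : ∀ l ∈ L.filter (fun l => l < k),
          |ee l (uvec k)| ≤ ε/(100 * 2^k * (k+1)) := by
        intro l hl
        have hlk := (Finset.mem_filter.1 hl).2
        have hq := q3 l k hlk
        have heq : ee l (uvec k) = H (J (q l)) (z (q k)) - H (J (q l)) (z (pidx k)) :=
          map_sub _ _ _
        rw [heq]
        exact le_of_lt hq
      calc ∑ l ∈ L.filter (fun l => l < k), |ee l (uvec k)|
          ≤ (L.filter (fun l => l < k)).card • (ε/(100 * 2^k * (k+1))) :=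
            Finset.sum_le_card_nsmul _ _ _ hbound
        _ = ((L.filter (fun l => l < k)).card : ℝ) * (ε/(100 * 2^k * (k+1))) := by
            rw [nsmul_eq_mul]
        _ ≤ (k : ℝ) * (ε/(100 * 2^k * (k+1))) :=
            mul_le_mul_of_nonneg_right hcard (by positivity)
        _ ≤ ε/100 := by
            have hkle : (k:ℝ) ≤ 2^k * (k+1) := by
              have ha : (1:ℝ) ≤ 2^k := one_le_pow₀ (by norm_num)
              nlinarith [(Nat.cast_nonneg k : (0:ℝ) ≤ (k:ℝ))]
            have hstep' : (k:ℝ) * (ε / (100 * 2 ^ k * (k + 1)))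
                ≤ (2^k*((k:ℝ)+1)) * (ε / (100 * 2 ^ k * (k + 1))) :=
              mul_le_mul_of_nonneg_right hkle (by positivity)
            have heq' : (2^k*((k:ℝ)+1)) * (ε / (100 * 2 ^ k * (k + 1))) = ε/100 := by
              have hne1 : (2:ℝ)^k ≠ 0 := by positivity
              have hne2 : ((k:ℝ)+1) ≠ 0 := by positivity
              field_simp
            linarith
    have hle2 : ∑ l ∈ L.filter (fun l => ¬ l < k), |ee l (uvec k)| ≤ ε/25 := by
      have hbound : ∀ l ∈ L.filter (fun l => ¬ l < k),
          |ee l (uvec k)| ≤ ε/50 * (1/2:ℝ)^(q l) := by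
        intro l hl
        obtain ⟨hlL, hnlt⟩ := Finset.mem_filter.1 hl
        have hkl : k < l := lt_of_le_of_ne (le_of_not_gt hnlt) (fun h => hkL (h ▸ hlL))
        have hq1 : q k < q l := qmono _ _ hkl
        have hp1' : pidx k < q l := lt_trans (q1 k) hq1
        have e1 := p3 (q k) (q l) hq1
        have e2 := p3 (pidx k) (q l) hp1'
        have heq : ee l (uvec k) = H (J (q l)) (z (q k)) - H (J (q l)) (z (pidx k)) :=
          map_sub _ _ _
        have h3 : |H (J (q l)) (z (q k)) - H (J (q l)) (z (pidx k))|
            ≤ |H (J (q l)) (z (q k))| + |H (J (q l)) (z (pidx k))| := by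
          simpa [Real.norm_eq_abs] using
            norm_sub_le (H (J (q l)) (z (q k))) (H (J (q l)) (z (pidx k)))
        rw [heq]
        calc |H (J (q l)) (z (q k)) - H (J (q l)) (z (pidx k))|
            ≤ |H (J (q l)) (z (q k))| + |H (J (q l)) (z (pidx k))| := h3
          _ ≤ ε/50 * (1/2:ℝ)^(q l) := by
              have : ε/100 * (1/2:ℝ)^(q l) + ε/100 * (1/2:ℝ)^(q l) = ε/50 * (1/2:ℝ)^(q l) := by
                ring
              linarith
      calc ∑ l ∈ L.filter (fun l => ¬ l < k), |ee l (uvec k)|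
          ≤ ∑ l ∈ L.filter (fun l => ¬ l < k), ε/50 * (1/2:ℝ)^(q l) :=
            Finset.sum_le_sum hbound
        _ = ε/50 * ∑ l ∈ L.filter (fun l => ¬ l < k), (1/2:ℝ)^(q l) := by
            rw [Finset.mul_sum]
        _ ≤ ε/50 * 2 := by
            refine mul_le_mul_of_nonneg_left ?_ (by positivity)
            have himg : ∑ l ∈ L.filter (fun l => ¬ l < k), ((1:ℝ)/2)^(q l)
                = ∑ j ∈ (L.filter (fun l => ¬ l < k)).image q, ((1:ℝ)/2)^j :=
              (Finset.sum_image (fun a _ b _ h => qinj h)).symm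
            rw [himg]
            exact geom_finset_sum_le _
        _ = ε/25 := by ring
    calc ∑ l ∈ L, |ee l (uvec k)|
        = ∑ l ∈ L.filter (fun l => l < k), |ee l (uvec k)|
          + ∑ l ∈ L.filter (fun l => ¬ l < k), |ee l (uvec k)| := hsplit.symm
      _ ≤ ε/100 + ε/25 := add_le_add hle1 hle2
      _ ≤ ε/20 := by linarith
  have hoffw : ∀ (k : ℕ) (L : Finset ℕ), k ∉ L → ∑ l ∈ L, |ee l (w k)| ≤ 1/5 := by
    intro k L hkL
    have h1 : ∀ l, |ee l (w k)| = (d k)⁻¹ * |ee l (uvec k)| := by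
      intro l
      rw [show w k = (d k)⁻¹ • uvec k from rfl, map_smul, smul_eq_mul, abs_mul,
        abs_of_pos (inv_pos.2 (hd0 k))]
    calc ∑ l ∈ L, |ee l (w k)| = (d k)⁻¹ * ∑ l ∈ L, |ee l (uvec k)| := by
          rw [Finset.mul_sum]
          exact Finset.sum_congr rfl (fun l _ => h1 l)
      _ ≤ (4/ε) * (ε/20) := mul_le_mul (hdinv k) (hoffu k L hkL)
          (Finset.sum_nonneg (fun l _ => abs_nonneg _)) (by positivity)
      _ = 1/5 := by
          have h2 : (4/ε) * (ε/20) = (ε/ε) * (4/20) := by ring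
          rw [h2, div_self (ne_of_gt hε)]
          norm_num
  have habs' : ∀ (zz : Z) (K : Finset ℕ), ∑ k ∈ K, |ee k zz| ≤ (2*K₀) * ‖zz‖ := by
    intro zz K
    have h := Habs zz K (fun k => J (q k))
      (fun i _ j _ hij => pdisj _ _ (fun hq => hij (qinj hq)))
    calc ∑ k ∈ K, |ee k zz| = ∑ k ∈ K, |H (J (q k)) zz| := rfl
      _ ≤ 2 * K₀ * ‖zz‖ := h
  exact absurd (contains_complemented_l1 ee w (8/ε) (2*K₀) (by positivity)
    hw hdiag hoffw habs') hZ

end Main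
end
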